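/- For words u, v, w over an alphabet containing distinct letters # , a, b with u, v ∈ #(a+b)*, u·w = w·v, and |w| = q·|u| + r with 0 ≤ r < |u|: then r = 0 and w = u^q. -/

import Mathlib

private lemma comm_pow {A : Type*} (u : List A) (q : ℕ) :
    u ++ (List.replicate q u).flatten = (List.replicate q u).flatten ++ u := by
  induction q with
  | zero => simp
  | succ q ih =>
    simp only [List.replicate_succ, List.flatten_cons]
    calc u ++ (u ++ (List.replicate q u).flatten)
        = u ++ ((List.replicate q u).flatten ++ u) := by rw [ih]
      _ = (u ++ (List.replicate q u).flatten) ++ u := (List.append_assoc _ _ _).symm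

private lemma peel {A : Type*} (u v : List A) :
    ∀ q (w : List A), u ++ w = w ++ v → q * u.length ≤ w.length →
      ∃ z, w = (List.replicate q u).flatten ++ z := by
  intro q
  induction q with
  | zero => intro w _ _; exact ⟨w, by simp⟩
  | succ q ih =>
    intro w heq hlen
    have hmul : (q + 1) * u.length = q * u.length + u.length := by ring
    have hu_le : u.length ≤ w.length := by omega
    have hpref : u <+: w := by
      have h1 : u <+: w ++ v := ⟨w, heq⟩
      have h2 : w <+: w ++ v := List.prefix_append w v
      exact List.prefix_of_prefix_length_le h1 h2 hu_le
    obtain ⟨w', rfl⟩ := hpref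
    have heq' : u ++ w' = w' ++ v := by
      apply List.append_cancel_left (as := u)
      simpa [List.append_assoc] using heq
    have hlen' : q * u.length ≤ w'.length := by
      simp only [List.length_append] at hlen
      omega
    obtain ⟨z, hz⟩ := ih w' heq' hlen'
    exact ⟨z, by simp [List.replicate_succ, hz, List.append_assoc]⟩

theorem stmt_16 {A : Type*} (h a b : A) (hha : h ≠ a) (hhb : h ≠ b) (hab : a ≠ b)
    (u v w : List A) (q r : ℕ)
    (hu : ∃ w' : List A, u = h :: w' ∧ ∀ c ∈ w', c = a ∨ c = b)
    (hv : ∃ w' : List A, v = h :: w' ∧ ∀ c ∈ w', c = a ∨ c = b)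
    (heq : u ++ w = w ++ v)
    (hlen : w.length = q * u.length + r) (hr : r < u.length) :
    r = 0 ∧ w = List.flatten (List.replicate q u) := by
  obtain ⟨u', hu', hu'ab⟩ := hu
  obtain ⟨v', hv', _⟩ := hv
  obtain ⟨z, hz⟩ := peel u v q w heq (by omega)
  have hJlen : (List.replicate q u).flatten.length = q * u.length := by
    simp [List.length_flatten, List.map_replicate, mul_comm]
  have hzlen : z.length = r := by
    have := congrArg List.length hz
    simp only [List.length_append] at this
    omega
  -- u ++ z = z ++ v
  have heq2 : u ++ z = z ++ v := by
    apply List.append_cancel_left (as := (List.replicate q u).flatten)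
    have : u ++ ((List.replicate q u).flatten ++ z) = ((List.replicate q u).flatten ++ z) ++ v := by
      rw [← hz]; exact heq
    rw [← List.append_assoc, comm_pow] at this
    simpa [List.append_assoc] using this
  rcases Nat.eq_zero_or_pos r with hr0 | hrpos
  · refine ⟨hr0, ?_⟩
    have : z = [] := List.length_eq_zero_iff.mp (by omega)
    simpa [this] using hz
  · exfalso
    -- z is a proper nonempty prefix of u
    have hzpref : z <+: u := by
      have h1 : z <+: z ++ v := List.prefix_append z v
      have h2 : u <+: z ++ v := ⟨z, heq2⟩
      exact List.prefix_of_prefix_length_le h1 h2 (by omega)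
    obtain ⟨t, ht⟩ := hzpref
    have htne : t ≠ [] := by
      intro h0
      have := congrArg List.length ht
      simp [h0] at this
      omega
    obtain ⟨c, t', rfl⟩ := List.exists_cons_of_ne_nil htne
    have hzne : z ≠ [] := by
      intro h0; simp [h0] at hzlen; omega
    obtain ⟨d, z', rfl⟩ := List.exists_cons_of_ne_nil hzne
    -- v = (c :: t') ++ z
    have hveq : v = (c :: t') ++ (d :: z') := by
      apply List.append_cancel_left (as := d :: z')
      rw [← heq2, ← ht]
      simp [List.append_assoc]
    have hc : c = h := by
      rw [hv'] at hveq
      exact (List.cons.injEq _ _ _ _ ▸ hveq).1.symm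
    -- c is in u.tail, which consists of a's and b's
    have hcu : c ∈ u' := by
      have : u = d :: (z' ++ c :: t') := by simpa using ht.symm
      rw [hu'] at this
      have h2 : u' = z' ++ c :: t' := (List.cons.injEq _ _ _ _ ▸ this).2
      rw [h2]
      simp
    rcases hu'ab c hcu with rfl | rfl
    · exact hha hc.symm
    · exact hhb hc.symm
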